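/- For every connected graph G of order n ≥ 2, eqdim(G) = 2 if and only if Δ(G) = n − 2. -/
import Mathlib


/-- `S` is a distance-equalizer set of `G`. -/
def IsDistEqSet {V : Type*} (G : SimpleGraph V) (S : Set V) : Prop :=
  ∀ u v : V, u ∉ S → v ∉ S → u ≠ v → ∃ x ∈ S, G.dist u x = G.dist v x

/-- The equidistant dimension of `G`. -/
noncomputable def eqdim {V : Type*} (G : SimpleGraph V) : ℕ :=
  sInf {k | ∃ S : Finset V, IsDistEqSet G ↑S ∧ S.card = k}

section Aux

variable {V : Type*} {G : SimpleGraph V}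

/-- pairwise agreement in one of two coordinates implies global agreement in one coordinate -/
lemma agree_aux {α : Type*} (P : α → Prop) (f g : α → ℕ)
    (h : ∀ u v, P u → P v → u ≠ v → f u = f v ∨ g u = g v) :
    (∀ u v, P u → P v → f u = f v) ∨ (∀ u v, P u → P v → g u = g v) := by
  by_cases hc : ∀ u v, P u → P v → f u = f v
  · exact Or.inl hc
  · push_neg at hc
    obtain ⟨a, b, ha, hb, hab⟩ := hc
    have hne : a ≠ b := fun e => hab (e ▸ rfl)
    have hg : g a = g b := (h a b ha hb hne).resolve_left hab
    right
    have key : ∀ u, P u → g u = g a := by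
      intro u hu
      by_cases hua : u = a
      · rw [hua]
      · by_cases hub : u = b
        · rw [hub, hg]
        · rcases h u a hu ha hua with h1 | h1
          · rcases h u b hu hb hub with h2 | h2
            · exact absurd (h1 ▸ h2) hab
            · rw [h2, hg]
          · exact h1
    intro u v hu hv
    rw [key u hu, key v hv]

lemma exists_adj [Fintype V] (hconn : G.Connected) (hn : 2 ≤ Fintype.card V) (v : V) :
    ∃ w, G.Adj v w := by
  obtain ⟨u, hu⟩ := Fintype.exists_ne_of_one_lt_card hn v
  obtain ⟨p⟩ := hconn.preconnected v u
  cases p with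
  | nil => exact absurd rfl hu.symm
  | cons h _ => exact ⟨_, h⟩

/-- if `y` is the only possible neighbor of `x`, distances to `x` go through `y` -/
lemma only_neighbor_dist (hconn : G.Connected) {x y u : V}
    (hy : ∀ w, G.Adj x w → w = y) (hux : u ≠ x) :
    G.dist u y + 1 = G.dist u x := by
  obtain ⟨p, hp⟩ := hconn.exists_walk_length_eq_dist x u
  cases p with
  | nil => exact absurd rfl hux.symm
  | @cons _ w _ h q =>
    have hw : w = y := hy w h
    have h1 : G.dist y u ≤ q.length := by
      rw [← hw]; exact SimpleGraph.dist_le q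
    have hlen : q.length + 1 = G.dist x u := hp
    have h2 : G.dist u x ≤ G.dist u y + G.dist y x := hconn.dist_triangle
    have h3 : G.dist y x = 1 := by
      rw [← hw]; exact SimpleGraph.dist_eq_one_iff_adj.mpr h.symm
    have h4 : G.dist u y = G.dist y u := SimpleGraph.dist_comm
    have h5 : G.dist u x = G.dist x u := SimpleGraph.dist_comm
    omega

variable [Fintype V] [DecidableRel G.Adj]

lemma degree_ge_of_adj_compl [DecidableEq V] {x y : V} (hxy : x ≠ y)
    (h : ∀ u, u ≠ x → u ≠ y → G.Adj x u) :
    Fintype.card V - 2 ≤ G.degree x := by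
  have hsub : (Finset.univ \ {x, y} : Finset V) ⊆ G.neighborFinset x := by
    intro u hu
    simp only [Finset.mem_sdiff, Finset.mem_univ, Finset.mem_insert,
      Finset.mem_singleton, true_and] at hu
    push_neg at hu
    exact (SimpleGraph.mem_neighborFinset G x u).mpr (h u hu.1 hu.2)
  have hcard : (Finset.univ \ {x, y} : Finset V).card = Fintype.card V - 2 := by
    rw [Finset.card_sdiff_of_subset (by simp)]
    simp [Finset.card_insert_of_notMem, hxy]
  calc Fintype.card V - 2 = (Finset.univ \ {x, y} : Finset V).card := hcard.symm
    _ ≤ (G.neighborFinset x).card := Finset.card_le_card hsub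
    _ = G.degree x := rfl

/-- key lemma: if all vertices outside {x,y} are equidistant from x, then Δ ≥ n-2 -/
lemma degree_bound (hconn : G.Connected) {x y : V} (hxy : x ≠ y)
    (hall : ∀ u v, u ≠ x → u ≠ y → v ≠ x → v ≠ y → G.dist u x = G.dist v x) :
    Fintype.card V - 2 ≤ G.maxDegree := by
  classical
  by_cases hD : ∃ u0, u0 ≠ x ∧ u0 ≠ y
  · obtain ⟨u0, hu0x, hu0y⟩ := hD
    set k := G.dist u0 x with hk
    have hkpos : 1 ≤ k := hconn.pos_dist_of_ne hu0x
    have hallk : ∀ u, u ≠ x → u ≠ y → G.dist u x = k :=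
      fun u h1 h2 => hall u u0 h1 h2 hu0x hu0y
    rcases Nat.lt_or_ge k 2 with hk1 | hk2
    · -- k = 1 : x is adjacent to everything outside {x,y}
      have hadj : ∀ u, u ≠ x → u ≠ y → G.Adj x u := by
        intro u h1 h2
        have hd1 : G.dist u x = 1 := by have := hallk u h1 h2; omega
        exact (SimpleGraph.dist_eq_one_iff_adj.mp hd1).symm
      exact le_trans (degree_ge_of_adj_compl hxy hadj) (G.degree_le_maxDegree x)
    · -- k ≥ 2 : y is the only neighbor of x
      have hxn : ∀ w, G.Adj x w → w = y := by
        intro w hw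
        by_contra hwy
        have hwx : w ≠ x := hw.ne'
        have h1 : G.dist w x = 1 := SimpleGraph.dist_eq_one_iff_adj.mpr hw.symm
        have := hallk w hwx hwy
        omega
      have hyd : ∀ u, u ≠ x → G.dist u y + 1 = G.dist u x :=
        fun u hu => only_neighbor_dist hconn hxn hu
      rcases Nat.lt_or_ge k 3 with hk3 | hk3
      · -- k = 2 : y adjacent to everything outside {x,y}
        have hadj : ∀ u, u ≠ y → u ≠ x → G.Adj y u := by
          intro u h1 h2
          have e1 := hyd u h2
          have e2 := hallk u h2 h1
          have : G.dist u y = 1 := by omega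
          exact (SimpleGraph.dist_eq_one_iff_adj.mp this).symm
        exact le_trans (degree_ge_of_adj_compl hxy.symm hadj) (G.degree_le_maxDegree y)
      · -- k ≥ 3 : then x is also the only neighbor of y, contradiction
        have hyn : ∀ w, G.Adj y w → w = x := by
          intro w hw
          by_contra hwx
          have hwy : w ≠ y := hw.ne'
          have h1 : G.dist w y = 1 := SimpleGraph.dist_eq_one_iff_adj.mpr hw.symm
          have e1 := hyd w hwx
          have e2 := hallk w hwx hwy
          omega
        have e1 := only_neighbor_dist hconn hyn hu0y
        have e2 := hyd u0 hu0x
        omega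
  · push_neg at hD
    have hle : Fintype.card V ≤ 2 := by
      have hsub : (Finset.univ : Finset V) ⊆ {x, y} := by
        intro u _
        simp only [Finset.mem_insert, Finset.mem_singleton]
        by_cases h1 : u = x
        · exact Or.inl h1
        · exact Or.inr (hD u h1)
      calc Fintype.card V = (Finset.univ : Finset V).card := rfl
        _ ≤ ({x, y} : Finset V).card := Finset.card_le_card hsub
        _ ≤ 2 := Finset.card_insert_le _ _ |>.trans (by simp)
    omega

lemma universal_of_degree [DecidableEq V] {w : V}
    (hw : G.degree w = Fintype.card V - 1) {u : V} (hu : u ≠ w) : G.Adj w u := by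
  have hsub : G.neighborFinset w ⊆ Finset.univ.erase w := by
    intro z hz
    rw [SimpleGraph.mem_neighborFinset] at hz
    exact Finset.mem_erase.mpr ⟨hz.ne', Finset.mem_univ z⟩
  have hcard : (Finset.univ.erase w : Finset V).card ≤ (G.neighborFinset w).card := by
    rw [Finset.card_erase_of_mem (Finset.mem_univ w)]
    simp only [Finset.card_univ]
    rw [SimpleGraph.card_neighborFinset_eq_degree, hw]
  have heq := Finset.eq_of_subset_of_card_le hsub hcard
  have : u ∈ G.neighborFinset w := by
    rw [heq]; exact Finset.mem_erase.mpr ⟨hu, Finset.mem_univ u⟩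
  exact (SimpleGraph.mem_neighborFinset G w u).mp this

end Aux

theorem stmt1 {V : Type*} [Fintype V] (G : SimpleGraph V) [DecidableRel G.Adj]
    (hconn : G.Connected) (hn : 2 ≤ Fintype.card V) :
    eqdim G = 2 ↔ G.maxDegree = Fintype.card V - 2 := by
  classical
  have hnonV : Nonempty V := hconn.nonempty
  set T := {k | ∃ S : Finset V, IsDistEqSet G ↑S ∧ S.card = k} with hT

  -- a singleton equalizer set forces a universal vertex
  have hsingle : ∀ w : V, IsDistEqSet G ({w} : Finset V) → G.degree w = Fintype.card V - 1 := by
    intro w hS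
    obtain ⟨z, hz⟩ := exists_adj hconn hn w
    have hadj : ∀ u, u ≠ w → G.Adj w u := by
      intro u hu
      by_cases huz : u = z
      · exact huz ▸ hz
      · obtain ⟨t, ht, hd⟩ := hS u z (by simp [hu]) (by simp [hz.ne']) huz
        simp only [Finset.coe_singleton, Set.mem_singleton_iff] at ht
        subst ht
        have : G.dist z t = 1 := SimpleGraph.dist_eq_one_iff_adj.mpr hz.symm
        rw [this] at hd
        exact (SimpleGraph.dist_eq_one_iff_adj.mp hd).symm
    have hsub : Finset.univ.erase w ⊆ G.neighborFinset w := by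
      intro u hu
      rw [Finset.mem_erase] at hu
      exact (SimpleGraph.mem_neighborFinset G w u).mpr (hadj u hu.1)
    have h1 : Fintype.card V - 1 ≤ G.degree w := by
      calc Fintype.card V - 1 = (Finset.univ.erase w).card := by
            rw [Finset.card_erase_of_mem (Finset.mem_univ w)]; simp
        _ ≤ (G.neighborFinset w).card := Finset.card_le_card hsub
        _ = G.degree w := rfl
    have h2 : G.degree w < Fintype.card V := G.degree_lt_card_verts w
    omega
  constructor
  · intro heq
    have hne : T.Nonempty := by
      by_contra h
      rw [Set.not_nonempty_iff_eq_empty] at h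
      rw [eqdim, ← hT, h, Nat.sInf_empty] at heq
      omega
    have hmem : 2 ∈ T := by
      have := Nat.sInf_mem hne
      rwa [show sInf T = 2 from heq] at this
    obtain ⟨S, hS, hcard⟩ := hmem
    obtain ⟨x, y, hxy, hSxy⟩ := Finset.card_eq_two.mp hcard
    subst hSxy
    -- upper bound : no universal vertex
    have hub : G.maxDegree ≤ Fintype.card V - 2 := by
      apply SimpleGraph.maxDegree_le_of_forall_degree_le
      intro v
      have hlt : G.degree v < Fintype.card V := G.degree_lt_card_verts v
      by_contra hcon
      have hdeg : G.degree v = Fintype.card V - 1 := by omega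
      -- then {v} is an equalizer set, contradicting eqdim = 2
      have hveq : IsDistEqSet G ({v} : Finset V) := by
        intro a b ha hb hab
        refine ⟨v, by simp, ?_⟩
        simp only [Finset.coe_singleton, Set.mem_singleton_iff] at ha hb
        have d1 : G.dist a v = 1 :=
          SimpleGraph.dist_eq_one_iff_adj.mpr (universal_of_degree hdeg ha).symm
        have d2 : G.dist b v = 1 :=
          SimpleGraph.dist_eq_one_iff_adj.mpr (universal_of_degree hdeg hb).symm
        rw [d1, d2]
      have h1 : (1 : ℕ) ∈ T := ⟨{v}, hveq, Finset.card_singleton v⟩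
      have := Nat.sInf_le h1
      rw [show sInf T = 2 from heq] at this
      omega
    -- lower bound via the agreement lemma
    have hlb : Fintype.card V - 2 ≤ G.maxDegree := by
      have hpair : ∀ u v, (u ≠ x ∧ u ≠ y) → (v ≠ x ∧ v ≠ y) → u ≠ v →
          G.dist u x = G.dist v x ∨ G.dist u y = G.dist v y := by
        intro u v hu hv huv
        obtain ⟨t, ht, hd⟩ := hS u v (by simp [hu.1, hu.2]) (by simp [hv.1, hv.2]) huv
        simp only [Finset.coe_insert, Set.mem_insert_iff, Finset.coe_singleton,
          Set.mem_singleton_iff] at ht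
        rcases ht with rfl | rfl
        · exact Or.inl hd
        · exact Or.inr hd
      rcases agree_aux (fun u => u ≠ x ∧ u ≠ y) (fun u => G.dist u x) (fun u => G.dist u y)
          hpair with hc | hc
      · exact degree_bound hconn hxy
          (fun u v h1 h2 h3 h4 => hc u v ⟨h1, h2⟩ ⟨h3, h4⟩)
      · exact degree_bound hconn hxy.symm
          (fun u v h1 h2 h3 h4 => hc u v ⟨h2, h1⟩ ⟨h4, h3⟩)
    omega
  · intro hΔ
    -- obtain a vertex of maximum degree
    obtain ⟨x, hx⟩ := G.exists_maximal_degree_vertex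
    have hdx : G.degree x = Fintype.card V - 2 := hx ▸ hΔ
    -- there is a unique non-neighbor y of x
    have hsub : G.neighborFinset x ⊆ Finset.univ.erase x := by
      intro z hz
      rw [SimpleGraph.mem_neighborFinset] at hz
      exact Finset.mem_erase.mpr ⟨hz.ne', Finset.mem_univ z⟩
    have hcard_er : (Finset.univ.erase x : Finset V).card = Fintype.card V - 1 := by
      rw [Finset.card_erase_of_mem (Finset.mem_univ x)]; simp
    have hdiff : ((Finset.univ.erase x) \ G.neighborFinset x).card = 1 := by
      rw [Finset.card_sdiff_of_subset hsub, hcard_er,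
        SimpleGraph.card_neighborFinset_eq_degree, hdx]
      omega
    obtain ⟨y, hy⟩ := Finset.card_eq_one.mp hdiff
    have hymem : y ∈ (Finset.univ.erase x) \ G.neighborFinset x := by rw [hy]; simp
    have hyx : y ≠ x := (Finset.mem_erase.mp (Finset.mem_sdiff.mp hymem).1).1
    have hadj : ∀ u, u ≠ x → u ≠ y → G.Adj x u := by
      intro u hux huy
      by_contra hcon
      have : u ∈ (Finset.univ.erase x) \ G.neighborFinset x := by
        rw [Finset.mem_sdiff, Finset.mem_erase]
        refine ⟨⟨hux, Finset.mem_univ u⟩, ?_⟩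
        rw [SimpleGraph.mem_neighborFinset]
        exact hcon
      rw [hy, Finset.mem_singleton] at this
      exact huy this
    -- {x, y} is a distance-equalizer set
    have hS : IsDistEqSet G ({x, y} : Finset V) := by
      intro u v hu hv huv
      simp only [Finset.coe_insert, Set.mem_insert_iff, Finset.coe_singleton,
        Set.mem_singleton_iff, not_or] at hu hv
      refine ⟨x, by simp, ?_⟩
      have d1 : G.dist u x = 1 := SimpleGraph.dist_eq_one_iff_adj.mpr (hadj u hu.1 hu.2).symm
      have d2 : G.dist v x = 1 := SimpleGraph.dist_eq_one_iff_adj.mpr (hadj v hv.1 hv.2).symm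
      rw [d1, d2]
    have h2T : (2 : ℕ) ∈ T := ⟨{x, y}, hS, by rw [Finset.card_insert_of_notMem (by simp [hyx.symm])]; simp⟩
    have hle : eqdim G ≤ 2 := Nat.sInf_le h2T
    have hge : 2 ≤ eqdim G := by
      by_contra hcon
      push_neg at hcon
      have hneT : T.Nonempty := ⟨2, h2T⟩
      have hmem := Nat.sInf_mem hneT
      obtain ⟨S, hSe, hScard⟩ := hmem
      have hScard2 : S.card < 2 := by
        have : sInf T < 2 := hcon
        omega
      interval_cases h : S.card
      · -- empty equalizer set : impossible since card V ≥ 2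
        obtain ⟨a, b, hab⟩ := Fintype.exists_pair_of_one_lt_card hn
        rw [Finset.card_eq_zero] at h
        subst h
        obtain ⟨t, ht, _⟩ := hSe a b (by simp) (by simp) hab
        simp at ht
      · -- singleton equalizer set : universal vertex, contradicting Δ = n - 2
        rw [Finset.card_eq_one] at h
        obtain ⟨w, rfl⟩ := h
        have hdw := hsingle w hSe
        have := G.degree_le_maxDegree w
        rw [hdw, hΔ] at this
        omega
    omega
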